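/- Let φ: ℕ → (0,1) be non-increasing with φ(n)/φ(n+1) < 2 for all n, and let l_1, …, l_j be positive integers with sum k. Assume K is large enough that φ²(2) + π²·4^{−1−K} + π²·4^{−K} ≤ 1 and π·2^{−K} ≤ 1. Then ∏_{i=1}^{j} (φ²(1 + l_1 + ⋯ + l_i) + π²·2^{−2(l_i + K)}) ≤ φ²(1 + k) + π²·2^{−2(k + K)}. -/

import Mathlib

open Real Finset

lemma phi_chain (φ : ℕ → ℝ) (hanti : ∀ n, φ (n + 1) ≤ φ n) :
    ∀ a b : ℕ, a ≤ b → φ b ≤ φ a :=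
  fun a b h => (antitone_nat_of_succ_le hanti) h

lemma phi_double_chain (φ : ℕ → ℝ) (hpos : ∀ n, 0 < φ n)
    (hdouble : ∀ n, φ n < 2 * φ (n + 1)) (n : ℕ) :
    ∀ t : ℕ, φ n ≤ (2:ℝ) ^ t * φ (n + t) := by
  intro t
  induction t with
  | zero => simp
  | succ t ih =>
    calc φ n ≤ (2:ℝ)^t * φ (n + t) := ih
      _ ≤ (2:ℝ)^t * (2 * φ (n + t + 1)) := by
          have := (hdouble (n + t)).le
          have h2 : (0:ℝ) ≤ 2^t := by positivity
          nlinarith [this]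
      _ = (2:ℝ)^(t+1) * φ (n + (t+1)) := by ring_nf

lemma key_real (a b f2 u v x : ℝ) (ha : 0 < a) (hb : 0 < b) (hub : a ≤ u * b)
    (haf : a ≤ f2) (hx : 0 < x) (hx1 : x ≤ 1) (hv : 2 ≤ v) (hu : 2 ≤ u)
    (hK : f2 ^ 2 + x / 4 + x ≤ 1) :
    (a ^ 2 + x / v ^ 2) * (b ^ 2 + x / u ^ 2) ≤ b ^ 2 + x / (v ^ 2 * u ^ 2) := by
  have hu0 : (0:ℝ) < u := by linarith
  have hv0 : (0:ℝ) < v := by linarith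
  have h1 : a ^ 2 * (x / u ^ 2) ≤ b ^ 2 * x := by
    have hab : a ^ 2 ≤ u ^ 2 * b ^ 2 := by nlinarith
    calc a ^ 2 * (x / u ^ 2) ≤ (u ^ 2 * b ^ 2) * (x / u ^ 2) := by
          have : (0:ℝ) ≤ x / u ^ 2 := by positivity
          exact mul_le_mul_of_nonneg_right hab this
      _ = b ^ 2 * x := by field_simp
  have h2 : a ^ 2 * b ^ 2 ≤ f2 ^ 2 * b ^ 2 := by
    have haf2 : a ^ 2 ≤ f2 ^ 2 := by nlinarith [mul_nonneg (sub_nonneg.mpr haf) (by linarith : (0:ℝ) ≤ f2 + a)]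
    nlinarith [sq_nonneg b]
  have h3 : b ^ 2 * (x / v ^ 2) ≤ b ^ 2 * (x / 4) := by
    have : x / v ^ 2 ≤ x / 4 := by
      apply div_le_div_of_nonneg_left hx.le (by norm_num) (by nlinarith)
    nlinarith [sq_nonneg b]
  have h4 : (x / v ^ 2) * (x / u ^ 2) ≤ x / (v ^ 2 * u ^ 2) := by
    rw [div_mul_div_comm, div_le_div_iff₀ (by positivity) (by positivity)]
    have hxx : x * x ≤ x := by nlinarith
    nlinarith [mul_le_mul_of_nonneg_right hxx (by positivity : (0:ℝ) ≤ v ^ 2 * u ^ 2)]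
  have h5 : b ^ 2 * (f2 ^ 2 + x / 4 + x) ≤ b ^ 2 := by nlinarith [sq_nonneg b]
  nlinarith [h1, h2, h3, h4, h5]

theorem product_induction_slow_decay (φ : ℕ → ℝ) (hφ : ∀ n, 0 < φ n ∧ φ n < 1)
    (hanti : ∀ n, φ (n + 1) ≤ φ n) (hdouble : ∀ n, φ n < 2 * φ (n + 1))
    (K : ℕ)
    (hK1 : φ 2 ^ 2 + π ^ 2 / 4 ^ (1 + K) + π ^ 2 / 4 ^ K ≤ 1)
    (hK2 : π / 2 ^ K ≤ 1)
    (j : ℕ) (hj : 1 ≤ j) (l : ℕ → ℕ) (hl : ∀ i < j, 1 ≤ l i)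
    (k : ℕ) (hk : k = ∑ s ∈ Finset.range j, l s) :
    ∏ i ∈ Finset.range j,
        (φ (1 + ∑ s ∈ Finset.range (i + 1), l s) ^ 2 + π ^ 2 / 2 ^ (2 * (l i + K)))
      ≤ φ (1 + k) ^ 2 + π ^ 2 / 2 ^ (2 * (k + K)) := by
  subst hk
  -- basic facts
  have hpi : (0:ℝ) < π := pi_pos
  set x : ℝ := π ^ 2 / 4 ^ K with hxdef
  have hx : 0 < x := by positivity
  have hx1 : x ≤ 1 := by
    rw [hxdef, div_le_one (by positivity)]
    have hpiK : π ≤ 2 ^ K := by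
      rw [div_le_one (by positivity)] at hK2; exact hK2
    calc π ^ 2 ≤ ((2:ℝ) ^ K) ^ 2 := by nlinarith
      _ = 4 ^ K := by rw [← pow_mul, mul_comm, pow_mul]; norm_num
  have hKx : φ 2 ^ 2 + x / 4 + x ≤ 1 := by
    have e : π ^ 2 / 4 ^ (1 + K) = x / 4 := by
      rw [hxdef, div_div, pow_add, pow_one, mul_comm]
    linarith [hK1, e ▸ hK1]
  have epow : ∀ t : ℕ, π ^ 2 / 2 ^ (2 * (t + K)) = x / ((2:ℝ) ^ t) ^ 2 := by
    intro t
    rw [hxdef, div_div]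
    congr 1
    rw [show 2 * (t + K) = (t + t) + (K + K) by ring, pow_add, pow_add]
    have : (4:ℝ) ^ K = 2 ^ K * 2 ^ K := by
      rw [show (4:ℝ) = 2 * 2 by norm_num, mul_pow]
    rw [this]; ring
  revert hl
  induction j, hj using Nat.le_induction with
  | base => intro _; simp
  | succ n hn ih =>
    intro hl
    have IH := ih (fun i hi => hl i (Nat.lt_succ_of_lt hi))
    rw [Finset.prod_range_succ, Finset.sum_range_succ]
    set m := ∑ s ∈ Finset.range n, l s with hm
    have hm1 : 1 ≤ m := by
      calc 1 ≤ l 0 := hl 0 (by omega)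
        _ ≤ m := Finset.single_le_sum (fun i _ => Nat.zero_le _)
            (Finset.mem_range.mpr hn)
    have hln : 1 ≤ l n := hl n (Nat.lt_succ_self n)
    -- multiply IH by the last (nonneg) factor
    have hfac : (0:ℝ) ≤ φ (1 + (m + l n)) ^ 2 + π ^ 2 / 2 ^ (2 * (l n + K)) := by
      positivity
    have step1 := mul_le_mul_of_nonneg_right IH hfac
    refine step1.trans ?_
    -- now apply key_real
    rw [epow m, epow (l n), epow (m + l n)]
    have hub : φ (1 + m) ≤ (2:ℝ) ^ (l n) * φ (1 + m + l n) :=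
      phi_double_chain φ (fun n => (hφ n).1) hdouble (1 + m) (l n)
    have haf : φ (1 + m) ≤ φ 2 := phi_chain φ hanti 2 (1 + m) (by omega)
    have hu : (2:ℝ) ≤ 2 ^ (l n) := by
      calc (2:ℝ) = 2 ^ 1 := (pow_one 2).symm
        _ ≤ 2 ^ (l n) := pow_le_pow_right₀ (by norm_num) hln
    have hv : (2:ℝ) ≤ 2 ^ m := by
      calc (2:ℝ) = 2 ^ 1 := (pow_one 2).symm
        _ ≤ 2 ^ m := pow_le_pow_right₀ (by norm_num) hm1
    have key := key_real (φ (1 + m)) (φ (1 + m + l n)) (φ 2) ((2:ℝ) ^ (l n))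
      ((2:ℝ) ^ m) x (hφ _).1 (hφ _).1 hub haf hx hx1 hv hu hKx
    have e1 : 1 + (m + l n) = 1 + m + l n := by omega
    have e2 : ((2:ℝ) ^ (m + l n)) ^ 2 = ((2:ℝ) ^ m) ^ 2 * ((2:ℝ) ^ (l n)) ^ 2 := by
      rw [pow_add]; ring
    rw [e1, e2]
    exact key
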